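/- For real numbers a, b, c, d, e ≥ 0 define, in ℝ⁵ with coordinates (u₁,…,u₅): P₁ := {u : 0 ≤ u₁ ≤ a, u₂ = u₃ = u₄ = u₅ = 0}; P₂ := {u : uᵢ ≥ 0, u₄ = u₅ = 0, u₁ ≤ b, u₃ ≤ c, u₁+u₃ ≤ b+c, u₁+u₂+u₃ ≤ b+c}; P₃ := {u : uᵢ ≥ 0, u₁ ≤ d, u₃ ≤ e, u₃+u₅ ≤ e, u₁+u₃ ≤ d+e, u₁+u₂+u₃ ≤ d+e, u₁+u₃+u₅ ≤ d+e, u₁+u₂+u₃+u₅ ≤ d+e, u₁+u₂+u₄+u₅ ≤ d+e}. (These are the FFLV polytopes P₁(0,a), P₂(0,b,b+c) and P₃(0,d,d+e,d+e) embedded in ℝ⁵.) Then the Minkowski sum P₁ + P₂ + P₃ equals the polytope Δ₅(a,b,c,d,e) := {u ∈ ℝ⁵ : u₁,…,u₅ ≥ 0; u₁ ≤ a+b+d; u₅ ≤ e; u₃+u₅ ≤ c+e; u₄+u₅ ≤ d+e; u₁+u₄+u₅ ≤ a+b+d+e; u₂+u₃+u₅ ≤ b+c+d+e; u₂+u₄+u₅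 ≤ b+c+d+e; u₁+u₂+u₃+u₅ ≤ a+b+c+d+e; u₁+u₂+u₄+u₅ ≤ a+b+c+d+e; u₂+u₃+u₄+2u₅ ≤ b+c+d+2e; u₁+u₂+u₃+u₄+2u₅ ≤ a+b+c+d+2e}. -/
import Mathlib

open Pointwise

/-- The FFLV polytope `P₁(0,a)` embedded in `ℝ⁵` (coordinates `u₁,…,u₅` are `u 0,…,u 4`). -/
def FFLV1 (a : ℝ) : Set (Fin 5 → ℝ) :=
  {u | 0 ≤ u 0 ∧ u 0 ≤ a ∧ u 1 = 0 ∧ u 2 = 0 ∧ u 3 = 0 ∧ u 4 = 0}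

/-- The FFLV polytope `P₂(0,b,b+c)` embedded in `ℝ⁵`. -/
def FFLV2 (b c : ℝ) : Set (Fin 5 → ℝ) :=
  {u | (∀ i, 0 ≤ u i) ∧ u 3 = 0 ∧ u 4 = 0 ∧ u 0 ≤ b ∧ u 2 ≤ c ∧ u 0 + u 2 ≤ b + c ∧
    u 0 + u 1 + u 2 ≤ b + c}

/-- The FFLV polytope `P₃(0,d,d+e,d+e)` embedded in `ℝ⁵`. -/
def FFLV3 (d e : ℝ) : Set (Fin 5 → ℝ) :=
  {u | (∀ i, 0 ≤ u i) ∧ u 0 ≤ d ∧ u 2 ≤ e ∧ u 2 + u 4 ≤ e ∧ u 0 + u 2 ≤ d + e ∧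
    u 0 + u 1 + u 2 ≤ d + e ∧ u 0 + u 2 + u 4 ≤ d + e ∧ u 0 + u 1 + u 2 + u 4 ≤ d + e ∧
    u 0 + u 1 + u 3 + u 4 ≤ d + e}

/-- The polytope `Δ₅(a,b,c,d,e) ⊂ ℝ⁵`. -/
def Delta5 (a b c d e : ℝ) : Set (Fin 5 → ℝ) :=
  {u | (∀ i, 0 ≤ u i) ∧ u 0 ≤ a + b + d ∧ u 4 ≤ e ∧ u 2 + u 4 ≤ c + e ∧
    u 3 + u 4 ≤ d + e ∧ u 0 + u 3 + u 4 ≤ a + b + d + e ∧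
    u 1 + u 2 + u 4 ≤ b + c + d + e ∧ u 1 + u 3 + u 4 ≤ b + c + d + e ∧
    u 0 + u 1 + u 2 + u 4 ≤ a + b + c + d + e ∧
    u 0 + u 1 + u 3 + u 4 ≤ a + b + c + d + e ∧
    u 1 + u 2 + u 3 + 2 * u 4 ≤ b + c + d + 2 * e ∧
    u 0 + u 1 + u 2 + u 3 + 2 * u 4 ≤ a + b + c + d + 2 * e}

/-- The Minkowski sum of the FFLV polytopes `P₁(0,a)`, `P₂(0,b,b+c)` and
`P₃(0,d,d+e,d+e)` equals `Δ₅(a,b,c,d,e)`. -/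
theorem FFLV_minkowski_sum_eq_Delta5 (a b c d e : ℝ)
    (ha : 0 ≤ a) (hb : 0 ≤ b) (hc : 0 ≤ c) (hd : 0 ≤ d) (he : 0 ≤ e) :
    FFLV1 a + FFLV2 b c + FFLV3 d e = Delta5 a b c d e := by
  ext u
  constructor
  · rintro ⟨v, ⟨x, hx, y, hy, rfl⟩, z, hz, rfl⟩
    obtain ⟨hx0, hxa, hx1, hx2, hx3, hx4⟩ := hx
    obtain ⟨hyp, hy3, hy4, hy0, hy2, hy02, hy012⟩ := hy
    obtain ⟨hzp, hz0, hz2, hz24, hz02, hz012, hz024, hz0124, hz0134⟩ := hz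
    have hy0' := hyp 0; have hy1' := hyp 1; have hy2' := hyp 2
    have hz0' := hzp 0; have hz1' := hzp 1; have hz2' := hzp 2
    have hz3' := hzp 3; have hz4' := hzp 4
    refine ⟨?_, ?_, ?_, ?_, ?_, ?_, ?_, ?_, ?_, ?_, ?_, ?_⟩ <;>
      simp only [Pi.add_apply]
    · intro i
      fin_cases i <;> simp only [Pi.add_apply]
      · exact add_nonneg (add_nonneg hx0 (hyp 0)) (hzp 0)
      · exact add_nonneg (add_nonneg (le_of_eq hx1.symm) (hyp 1)) (hzp 1)
      · exact add_nonneg (add_nonneg (le_of_eq hx2.symm) (hyp 2)) (hzp 2)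
      · exact add_nonneg (add_nonneg (le_of_eq hx3.symm) (hyp 3)) (hzp 3)
      · exact add_nonneg (add_nonneg (le_of_eq hx4.symm) (hyp 4)) (hzp 4)
    all_goals linarith
  · rintro ⟨hup, h1, h2, h3, h4, h5, h6, h7, h8, h9, h10, h11⟩
    have hu0 := hup 0; have hu1 := hup 1; have hu2 := hup 2
    have hu3 := hup 3; have hu4 := hup 4
    set x0 : ℝ := min (u 0) a with hx0def
    set z2 : ℝ := min (u 2) (e - u 4) with hz2def
    set z0 : ℝ := min (u 0 - x0) (min d (d + e - u 3 - u 4)) with hz0def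
    set z1 : ℝ := min (u 1) (min (d + e - u 3 - u 4 - z0) (d + e - u 4 - z2 - z0))
      with hz1def
    -- basic bounds
    have hx0_le : x0 ≤ u 0 := min_le_left _ _
    have hx0_le_a : x0 ≤ a := min_le_right _ _
    have hx0_nn : 0 ≤ x0 := le_min hu0 ha
    have hz2_le_u2 : z2 ≤ u 2 := min_le_left _ _
    have hz2_le : z2 ≤ e - u 4 := min_le_right _ _
    have hz2_nn : 0 ≤ z2 := le_min hu2 (by linarith)
    have hz0_le1 : z0 ≤ u 0 - x0 := min_le_left _ _
    have hz0_le2 : z0 ≤ d := le_trans (min_le_right _ _) (min_le_left _ _)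
    have hz0_le3 : z0 ≤ d + e - u 3 - u 4 :=
      le_trans (min_le_right _ _) (min_le_right _ _)
    have hz0_nn : 0 ≤ z0 := le_min (by linarith) (le_min hd (by linarith))
    have hz1_le1 : z1 ≤ u 1 := min_le_left _ _
    have hz1_le2 : z1 ≤ d + e - u 3 - u 4 - z0 :=
      le_trans (min_le_right _ _) (min_le_left _ _)
    have hz1_le3 : z1 ≤ d + e - u 4 - z2 - z0 :=
      le_trans (min_le_right _ _) (min_le_right _ _)
    have hz1_nn : 0 ≤ z1 := le_min hu1 (le_min (by linarith) (by linarith))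
    refine ⟨![x0, 0, 0, 0, 0] + ![u 0 - x0 - z0, u 1 - z1, u 2 - z2, 0, 0],
      ⟨![x0, 0, 0, 0, 0], ⟨?_, ?_, ?_, ?_, ?_, ?_⟩,
       ![u 0 - x0 - z0, u 1 - z1, u 2 - z2, 0, 0],
        ⟨?_, ?_, ?_, ?_, ?_, ?_, ?_⟩, rfl⟩,
      ![z0, z1, z2, u 3, u 4], ⟨?_, ?_, ?_, ?_, ?_, ?_, ?_, ?_, ?_⟩, ?_⟩
    -- FFLV1 membership
    · exact hx0_nn
    · exact hx0_le_a
    · rfl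
    · rfl
    · rfl
    · rfl
    -- FFLV2 membership
    · intro i
      fin_cases i <;> simp <;> linarith
    · rfl
    · rfl
    -- y0 ≤ b
    · simp only [Matrix.cons_val_zero]
      rcases min_cases (u 0) a with ⟨hx, hx'⟩ | ⟨hx, hx'⟩ <;>
        rcases min_cases (u 0 - x0) (min d (d + e - u 3 - u 4)) with ⟨hz, hz'⟩ | ⟨hz, hz'⟩ <;>
        rcases min_cases d (d + e - u 3 - u 4) with ⟨hm, hm'⟩ | ⟨hm, hm'⟩ <;>
        linarith
    -- y2 ≤ c
    · simp only [Matrix.cons_val_two, Matrix.tail_cons, Matrix.head_cons]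
      rcases min_cases (u 2) (e - u 4) with ⟨hz, _⟩ | ⟨hz, hz'⟩ <;>
        rw [← hz2def] at hz <;> linarith
    -- y0 + y2 ≤ b + c
    · simp only [Matrix.cons_val_zero, Matrix.cons_val_two, Matrix.tail_cons,
        Matrix.head_cons]
      rcases min_cases (u 0) a with ⟨hx, hx'⟩ | ⟨hx, hx'⟩ <;>
        rcases min_cases (u 0 - x0) (min d (d + e - u 3 - u 4)) with ⟨hz, hz'⟩ | ⟨hz, hz'⟩ <;>
        rcases min_cases d (d + e - u 3 - u 4) with ⟨hm, hm'⟩ | ⟨hm, hm'⟩ <;>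
        rcases min_cases (u 2) (e - u 4) with ⟨h2', h2''⟩ | ⟨h2', h2''⟩ <;>
        linarith
    -- y0 + y1 + y2 ≤ b + c
    · simp only [Matrix.cons_val_zero, Matrix.cons_val_one, Matrix.head_cons,
        Matrix.cons_val_two, Matrix.tail_cons]
      rcases min_cases (u 0) a with ⟨hx, hx'⟩ | ⟨hx, hx'⟩ <;>
        rcases min_cases (u 0 - x0) (min d (d + e - u 3 - u 4)) with ⟨hz, hz'⟩ | ⟨hz, hz'⟩ <;>
        rcases min_cases d (d + e - u 3 - u 4) with ⟨hm, hm'⟩ | ⟨hm, hm'⟩ <;>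
        rcases min_cases (u 2) (e - u 4) with ⟨h2', h2''⟩ | ⟨h2', h2''⟩ <;>
        rcases min_cases (u 1) (min (d + e - u 3 - u 4 - z0) (d + e - u 4 - z2 - z0))
          with ⟨h1', h1''⟩ | ⟨h1', h1''⟩ <;>
        rcases min_cases (d + e - u 3 - u 4 - z0) (d + e - u 4 - z2 - z0)
          with ⟨hn, hn'⟩ | ⟨hn, hn'⟩ <;>
        linarith
    -- FFLV3 membership
    · intro i
      fin_cases i <;> simp <;> linarith
    · exact hz0_le2
    · simpa using (by linarith : z2 ≤ e)
    · simpa using (by linarith : z2 + u 4 ≤ e)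
    · simpa using (by linarith : z0 + z2 ≤ d + e)
    · simpa using (by linarith : z0 + z1 + z2 ≤ d + e)
    · simpa using (by linarith : z0 + z2 + u 4 ≤ d + e)
    · simpa using (by linarith : z0 + z1 + z2 + u 4 ≤ d + e)
    · simpa using (by linarith : z0 + z1 + u 3 + u 4 ≤ d + e)
    -- sum equals u
    · funext i
      fin_cases i <;> simp <;> ring
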